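/- Let q = 2^m and let a, γ ∈ F_q with a² + a + 1 ≠ 0. Fix α ∈ F_{q^3}* with Tr_{F_{q^3}/F_q}(α) = 0 such that {1, α, α^q} is a basis of F_{q^3} over F_q, and let h : F_{q^3} → F_{q^3} be any function. Then the map f(X) = X + aX^q + γ·Tr_{F_{q^3}/F_q}(h(X)) is a bijection of F_{q^3} if and only if for every y, z ∈ F_q the map x ↦ (a+1)x + γ·Tr_{F_{q^3}/F_q}(h(x + yα + zα^q)) is a bijection of F_q. -/

import Mathlib

theorem stmt_4 (m : ℕ) (hm : 0 < m) (q : ℕ) (hq : q = 2 ^ m)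
    (F E : Type*) [Field F] [Fintype F] [Field E] [Fintype E] [Algebra F E]
    (hF : Fintype.card F = q) (hE : Fintype.card E = q ^ 3)
    (Tr : E → E) (hTr : ∀ X, Tr X = X + X ^ q + X ^ q ^ 2)
    (a γ : F) (ha : a ^ 2 + a + 1 ≠ 0)
    (α : E) (hα0 : α ≠ 0) (hαtr : Tr α = 0)
    (hb : ∃ b : Module.Basis (Fin 3) F E, b 0 = 1 ∧ b 1 = α ∧ b 2 = α ^ q)
    (h : E → E) :
    Function.Bijective
        (fun X : E => X + algebraMap F E a * X ^ q + algebraMap F E γ * Tr (h X)) ↔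
      ∀ y z : F,
        Set.BijOn
          (fun x : E =>
            (algebraMap F E a + 1) * x +
              algebraMap F E γ *
                Tr (h (x + algebraMap F E y * α + algebraMap F E z * α ^ q)))
          (Set.range (algebraMap F E)) (Set.range (algebraMap F E)) := by
  classical
  obtain ⟨b, hb0, hb1, hb2⟩ := hb
  haveI : Fact (Nat.Prime 2) := ⟨Nat.prime_two⟩
  haveI hFchar : CharP F 2 := by
    have hp : (ringChar F).Prime := CharP.char_is_prime F (ringChar F)
    obtain ⟨n, hn⟩ := FiniteField.card F (ringChar F)
    have h2 : ringChar F = 2 := by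
      have hd : ringChar F ∣ 2 ^ m := by
        rw [← hq, ← hF, hn.2]; exact dvd_pow_self _ (by exact_mod_cast n.pos.ne')
      exact (Nat.prime_dvd_prime_iff_eq hp Nat.prime_two).mp (hp.dvd_of_dvd_pow hd)
    exact ringChar.of_eq h2
  haveI hEchar : CharP E 2 := charP_of_injective_ringHom (algebraMap F E).injective 2
  set i := algebraMap F E with hidef
  have hinj : Function.Injective i := (algebraMap F E).injective
  have h20F : (2 : F) = 0 := by exact_mod_cast CharP.cast_eq_zero F 2
  have h20E : (2 : E) = 0 := by exact_mod_cast CharP.cast_eq_zero E 2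
  have hq2 : 2 ≤ q := by
    rw [hq]
    calc 2 = 2 ^ 1 := (pow_one 2).symm
    _ ≤ 2 ^ m := Nat.pow_le_pow_right (by norm_num) hm
  -- basic Frobenius facts
  have hFq : ∀ c : F, c ^ q = c := by
    intro c; rw [← hF]; exact FiniteField.pow_card c
  have hiq : ∀ c : F, (i c) ^ q = i c := by
    intro c; rw [← map_pow, hFq]
  have haddq : ∀ u v : E, (u + v) ^ q = u ^ q + v ^ q := by
    intro u v; rw [hq]; exact add_pow_char_pow u v 2 m
  have hE3 : ∀ X : E, ((X ^ q) ^ q) ^ q = X := by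
    intro X
    have e1 : ((X ^ q) ^ q) ^ q = X ^ q ^ 3 := by
      rw [← pow_mul, ← pow_mul]; congr 1; ring
    rw [e1, ← hE, FiniteField.pow_card]
  have hpow2 : ∀ X : E, X ^ q ^ 2 = (X ^ q) ^ q := by
    intro X; rw [← pow_mul]; congr 1; ring
  -- fixed points of Frobenius are exactly the base field
  have hfix : ∀ X : E, X ^ q = X → X ∈ Set.range i := by
    intro X hX
    set p : Polynomial E := Polynomial.X ^ q - Polynomial.X with hp
    have hdegX : (Polynomial.X : Polynomial E).natDegree <
        (Polynomial.X ^ q : Polynomial E).natDegree := by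
      rw [Polynomial.natDegree_X, Polynomial.natDegree_X_pow]; omega
    have hpdeg : p.natDegree = q := by
      rw [hp, Polynomial.natDegree_sub_eq_left_of_natDegree_lt hdegX,
        Polynomial.natDegree_X_pow]
    have hp0 : p ≠ 0 := by
      intro h0; rw [h0, Polynomial.natDegree_zero] at hpdeg; omega
    have hroot : ∀ c : E, c ^ q = c → c ∈ p.roots.toFinset := by
      intro c hc
      rw [Multiset.mem_toFinset, Polynomial.mem_roots hp0]
      simp [hp, Polynomial.IsRoot, hc]
    have hKf : (Finset.univ.image i) ⊆ p.roots.toFinset := by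
      intro c hc
      obtain ⟨x, _, rfl⟩ := Finset.mem_image.mp hc
      exact hroot _ (hiq x)
    have hcard : p.roots.toFinset.card ≤ (Finset.univ.image i).card := by
      calc p.roots.toFinset.card ≤ Multiset.card p.roots := Multiset.toFinset_card_le _
      _ ≤ p.natDegree := Polynomial.card_roots' p
      _ = q := hpdeg
      _ = Fintype.card F := hF.symm
      _ = (Finset.univ.image i).card := by
          rw [Finset.card_image_of_injective _ hinj, Finset.card_univ]
    have heq := Finset.eq_of_subset_of_card_le hKf hcard
    have hXmem : X ∈ Finset.univ.image i := by rw [heq]; exact hroot X hX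
    obtain ⟨x, _, hx⟩ := Finset.mem_image.mp hXmem
    exact ⟨x, hx⟩
  -- the trace lands in the base field
  have hTrK : ∀ X : E, Tr X ∈ Set.range i := by
    intro X
    apply hfix
    rw [hTr, hpow2, haddq, haddq, hE3]
    ring
  -- α ^ (q^2) = α + α^q
  have hα2 : (α ^ q) ^ q = α + α ^ q := by
    have h1 := hαtr
    rw [hTr, hpow2] at h1
    linear_combination h1 - (α + α ^ q) * h20E
  -- decomposition along the basis
  have hdec : ∀ X : E, ∃ x y z : F, X = i x + i y * α + i z * α ^ q := by
    intro X
    refine ⟨b.repr X 0, b.repr X 1, b.repr X 2, ?_⟩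
    have hs := b.sum_repr X
    rw [Fin.sum_univ_three, hb0, hb1, hb2] at hs
    rw [Algebra.smul_def, Algebra.smul_def, Algebra.smul_def, mul_one] at hs
    exact hs.symm
  -- uniqueness of coordinates
  have huniq : ∀ c0 c1 c2 d0 d1 d2 : F,
      i c0 + i c1 * α + i c2 * α ^ q = i d0 + i d1 * α + i d2 * α ^ q →
      c0 = d0 ∧ c1 = d1 ∧ c2 = d2 := by
    intro c0 c1 c2 d0 d1 d2 hcd
    have hsum : ∑ j, (![c0 - d0, c1 - d1, c2 - d2]) j • b j = 0 := by
      rw [Fin.sum_univ_three, hb0, hb1, hb2]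
      simp only [Matrix.cons_val_zero, Matrix.cons_val_one, Matrix.head_cons,
        Matrix.cons_val_two, Matrix.tail_cons, Algebra.smul_def, map_sub]
      linear_combination hcd
    have hli := Fintype.linearIndependent_iff.mp b.linearIndependent _ hsum
    exact ⟨sub_eq_zero.mp (hli 0), sub_eq_zero.mp (hli 1), sub_eq_zero.mp (hli 2)⟩
  -- injectivity of the (y,z) linear part
  have hM : ∀ y z y' z' : F, y + a * z = y' + a * z' →
      a * y + (a + 1) * z = a * y' + (a + 1) * z' → y = y' ∧ z = z' := by
    intro y z y' z' e1 e2
    have hz : z = z' := by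
      have hmul : (a ^ 2 + a + 1) * (z - z') = 0 := by
        linear_combination e2 - a * e1 + a ^ 2 * (z - z') * h20F
      have := mul_eq_zero.mp hmul
      rcases this with h' | h'
      · exact absurd h' ha
      · exact sub_eq_zero.mp h'
    refine ⟨?_, hz⟩
    rw [hz] at e1
    exact add_right_cancel e1
  -- head is in the base field
  have hgK : ∀ (y z x : F), ∃ s : F,
      (i a + 1) * i x + i γ * Tr (h (i x + i y * α + i z * α ^ q)) = i s := by
    intro y z x
    obtain ⟨t, ht⟩ := hTrK (h (i x + i y * α + i z * α ^ q))
    refine ⟨(a + 1) * x + γ * t, ?_⟩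
    rw [← ht]
    simp only [map_add, map_mul, map_one]
  -- key computation
  have hkey : ∀ x y z : F,
      (i x + i y * α + i z * α ^ q) + i a * (i x + i y * α + i z * α ^ q) ^ q
        + i γ * Tr (h (i x + i y * α + i z * α ^ q)) =
      ((i a + 1) * i x + i γ * Tr (h (i x + i y * α + i z * α ^ q)))
        + i (y + a * z) * α + i (a * y + (a + 1) * z) * α ^ q := by
    intro x y z
    have hUq : (i x + i y * α + i z * α ^ q) ^ q
        = i x + i z * α + (i y + i z) * α ^ q := by
      rw [haddq, haddq, mul_pow, mul_pow, hiq, hiq, hiq, hα2]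
      ring
    rw [hUq]
    simp only [map_add, map_mul, map_one]
    ring
  -- main equivalence
  constructor
  · intro hbij y z
    refine ⟨?_, ?_, ?_⟩
    · rintro X ⟨x, rfl⟩
      obtain ⟨s, hs⟩ := hgK y z x
      exact ⟨s, hs.symm⟩
    · rintro X ⟨x, rfl⟩ X' ⟨x', rfl⟩ hxx'
      simp only at hxx'
      have hfU : (fun X : E => X + i a * X ^ q + i γ * Tr (h X))
            (i x + i y * α + i z * α ^ q)
          = (fun X : E => X + i a * X ^ q + i γ * Tr (h X))
            (i x' + i y * α + i z * α ^ q) := by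
        simp only
        rw [hkey x y z, hkey x' y z, hxx']
      have hU := hbij.injective hfU
      have := add_right_cancel (add_right_cancel hU)
      rw [this]
    · rintro W ⟨w, rfl⟩
      obtain ⟨U, hU⟩ := hbij.surjective
        (i w + i (y + a * z) * α + i (a * y + (a + 1) * z) * α ^ q)
      obtain ⟨x', y', z', rfl⟩ := hdec U
      simp only at hU
      rw [hkey x' y' z'] at hU
      obtain ⟨s, hs⟩ := hgK y' z' x'
      rw [hs] at hU
      obtain ⟨h0, h1, h2⟩ := huniq _ _ _ _ _ _ hU
      obtain ⟨hyy, hzz⟩ := hM y' z' y z h1 h2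
      refine ⟨i x', ⟨x', rfl⟩, ?_⟩
      simp only
      rw [← hyy, ← hzz, hs, h0]
  · intro hg
    rw [← Finite.injective_iff_bijective]
    intro U U' hUU'
    obtain ⟨x, y, z, rfl⟩ := hdec U
    obtain ⟨x', y', z', rfl⟩ := hdec U'
    simp only at hUU'
    rw [hkey x y z, hkey x' y' z'] at hUU'
    obtain ⟨s, hs⟩ := hgK y z x
    obtain ⟨s', hs'⟩ := hgK y' z' x'
    rw [hs, hs'] at hUU'
    obtain ⟨h0, h1, h2⟩ := huniq _ _ _ _ _ _ hUU'
    obtain ⟨hyy, hzz⟩ := hM y z y' z' h1 h2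
    subst hyy; subst hzz
    have hx : i x = i x' := by
      apply (hg y z).injOn ⟨x, rfl⟩ ⟨x', rfl⟩
      simp only
      rw [hs, hs', h0]
    rw [hx]
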